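/- arXiv:1811.03613 — 4 statements merged into one kernel-verified Lean document; each statement's English description precedes it below -/
import Mathlib

section
/- For every z = (u,v,w) in the unit sphere S^5 ⊂ ℂ³ (i.e. |u|²+|v|²+|w|²=1), the 3×3 complex matrix θ(z) with rows (u², vu+w̄, wu−v̄), (uv−w̄, v², wv+ū), (uw+v̄, vw−ū, w²) is a special unitary matrix, i.e. θ(z) ∈ SU(3). -/
open Matrix in
/-- The transition-function matrix `θ(u,v,w)` lies in `SU(3)` for `(u,v,w)` on the unit
sphere `S⁵ ⊂ ℂ³`. -/
theorem theta_mem_specialUnitaryGroup (u v w : ℂ)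
    (h : ‖u‖ ^ 2 + ‖v‖ ^ 2 + ‖w‖ ^ 2 = 1) :
    (Matrix.of ![![u ^ 2, v * u + star w, w * u - star v],
                 ![u * v - star w, v ^ 2, w * v + star u],
                 ![u * w + star v, v * w - star u, w ^ 2]]) ∈
      Matrix.specialUnitaryGroup (Fin 3) ℂ := by
  have hs : u * (starRingEnd ℂ) u + v * (starRingEnd ℂ) v + w * (starRingEnd ℂ) w = 1 := by
    simp only [Complex.mul_conj]
    norm_cast
    rw [← Complex.sq_norm, ← Complex.sq_norm, ← Complex.sq_norm]
    exact_mod_cast h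
  rw [Matrix.mem_specialUnitaryGroup_iff]
  constructor
  · rw [Matrix.mem_unitaryGroup_iff]
    ext i j
    fin_cases i <;> fin_cases j <;>
      simp [Matrix.mul_apply, Fin.sum_univ_succ, Matrix.one_apply, Matrix.star_apply,
        Complex.star_def, _root_.map_mul, _root_.map_add, _root_.map_sub, map_pow] <;>
    [ linear_combination (u * (starRingEnd ℂ) u + 1) * hs;
      linear_combination (u * (starRingEnd ℂ) v) * hs;
      linear_combination (u * (starRingEnd ℂ) w) * hs;
      linear_combination (v * (starRingEnd ℂ) u) * hs;
      linear_combination (v * (starRingEnd ℂ) v + 1) * hs;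
      linear_combination (v * (starRingEnd ℂ) w) * hs;
      linear_combination (w * (starRingEnd ℂ) u) * hs;
      linear_combination (w * (starRingEnd ℂ) v) * hs;
      linear_combination (w * (starRingEnd ℂ) w + 1) * hs]
  · rw [Matrix.det_fin_three]
    simp only [Matrix.of_apply, Matrix.cons_val', Matrix.cons_val_zero, Matrix.empty_val',
      Matrix.cons_val_fin_one, Matrix.cons_val_one, Matrix.head_cons, Matrix.head_fin_const,
      Matrix.cons_val_two, Matrix.tail_cons, Complex.star_def]
    linear_combination (u * (starRingEnd ℂ) u + v * (starRingEnd ℂ) v + w * (starRingEnd ℂ) w + 1) * hs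
end

section
/- In the octonions (the Cayley–Dickson double of the quaternions), for all a, x, y: a·x·conj(y) + a·y·conj(x) = 2⟨x,y⟩·a, where ⟨x,y⟩ is the real inner product ⟨x,y⟩ = (x·conj(y) + y·conj(x))/2 ∈ ℝ and products are taken as (a x)·conj(y). -/
/-- The octonions, as the Cayley–Dickson double of the quaternions:
pairs `(a, b)` of quaternions with `(a,b)(u,v) = (au - v̄ b, b ū + v a)`. -/
@[ext] structure Oct where
  x : Quaternion ℝ
  y : Quaternion ℝ

namespace Oct

noncomputable instance : Zero Oct := ⟨⟨0, 0⟩⟩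
noncomputable instance : One Oct := ⟨⟨1, 0⟩⟩
noncomputable instance : Add Oct := ⟨fun p q => ⟨p.x + q.x, p.y + q.y⟩⟩
noncomputable instance : Neg Oct := ⟨fun p => ⟨-p.x, -p.y⟩⟩
noncomputable instance : Sub Oct := ⟨fun p q => p + -q⟩
noncomputable instance : Mul Oct := ⟨fun p q => ⟨p.x * q.x - star q.y * p.y, p.y * star q.x + q.y * p.x⟩⟩
noncomputable instance : SMul ℝ Oct := ⟨fun t p => ⟨t • p.x, t • p.y⟩⟩

/-- Octonion conjugation: `(a, b)̄ = (ā, -b)`. -/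
noncomputable def conj (p : Oct) : Oct := ⟨star p.x, -p.y⟩

/-- The real part of an octonion. -/
noncomputable def re (p : Oct) : ℝ := p.x.re

/-- The Euclidean inner product on the octonions: `⟨p, q⟩ = Re (p q̄)`. -/
noncomputable def inner (p q : Oct) : ℝ := (p * conj q).re

/-- The squared norm of an octonion. -/
noncomputable def normSq (p : Oct) : ℝ := inner p p

/-- The basic imaginary unit `i` of the octonions. -/
noncomputable def i : Oct := ⟨⟨0, 1, 0, 0⟩, 0⟩

/-- The inverse of an octonion: `r⁻¹ = r̄ / |r|²`. -/
noncomputable def inv (p : Oct) : Oct := (normSq p)⁻¹ • conj p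

end Oct

set_option maxHeartbeats 4000000 in
/-- In the octonions, `(ax)ȳ + (ay)x̄ = 2⟨x,y⟩ a`. -/
theorem oct_mul_conj_add (a x y : Oct) :
    (a * x) * Oct.conj y + (a * y) * Oct.conj x = (2 * Oct.inner x y) • a := by
  have mul_x : ∀ p q : Oct, (p * q).x = p.x * q.x - star q.y * p.y := fun _ _ => rfl
  have mul_y : ∀ p q : Oct, (p * q).y = p.y * star q.x + q.y * p.x := fun _ _ => rfl
  have add_x : ∀ p q : Oct, (p + q).x = p.x + q.x := fun _ _ => rfl
  have add_y : ∀ p q : Oct, (p + q).y = p.y + q.y := fun _ _ => rfl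
  have smul_x : ∀ (t : ℝ) (p : Oct), (t • p).x = t • p.x := fun _ _ => rfl
  have smul_y : ∀ (t : ℝ) (p : Oct), (t • p).y = t • p.y := fun _ _ => rfl
  obtain ⟨a1, a5⟩ := a
  obtain ⟨x1, x5⟩ := x
  obtain ⟨y1, y5⟩ := y
  ext : 1 <;>
  · simp only [mul_x, mul_y, add_x, add_y, smul_x, smul_y, Oct.conj, Oct.inner, Oct.re,
      Quaternion.ext_iff, Quaternion.re_mul, Quaternion.imI_mul, Quaternion.imJ_mul,
      Quaternion.imK_mul, Quaternion.re_sub, Quaternion.imI_sub, Quaternion.imJ_sub,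
      Quaternion.imK_sub, Quaternion.re_add, Quaternion.imI_add, Quaternion.imJ_add,
      Quaternion.imK_add, Quaternion.re_neg, Quaternion.imI_neg, Quaternion.imJ_neg,
      Quaternion.imK_neg, Quaternion.re_star, Quaternion.imI_star, Quaternion.imJ_star,
      Quaternion.imK_star, Quaternion.re_smul, Quaternion.imI_smul, Quaternion.imJ_smul,
      Quaternion.imK_smul, smul_eq_mul]
    refine ⟨?_, ?_, ?_, ?_⟩ <;> ring
end

section
/- If a non-real octonion r satisfies 4·(Re r)² = |r|², then its cube r³ is a real number; conversely, if r is a non-real octonion with r³ real, then 4·(Re r)² = |r|². -/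
set_option maxHeartbeats 2000000

namespace Oct

@[simp] lemma mul_x' (p q : Oct) : (p*q).x = p.x*q.x - star q.y * p.y := rfl
@[simp] lemma mul_y' (p q : Oct) : (p*q).y = p.y * star q.x + q.y * p.x := rfl
@[simp] lemma add_x' (p q : Oct) : (p+q).x = p.x + q.x := rfl
@[simp] lemma add_y' (p q : Oct) : (p+q).y = p.y + q.y := rfl
@[simp] lemma smul_x' (t : ℝ) (p : Oct) : (t • p).x = t • p.x := rfl
@[simp] lemma smul_y' (t : ℝ) (p : Oct) : (t • p).y = t • p.y := rfl
@[simp] lemma one_x' : (1 : Oct).x = 1 := rfl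
@[simp] lemma one_y' : (1 : Oct).y = 0 := rfl
@[simp] lemma conj_x' (p : Oct) : (conj p).x = star p.x := rfl
@[simp] lemma conj_y' (p : Oct) : (conj p).y = -p.y := rfl

lemma normSq_eq (p : Oct) : normSq p = p.x.re^2 + p.x.imI^2 + p.x.imJ^2 + p.x.imK^2
    + p.y.re^2 + p.y.imI^2 + p.y.imJ^2 + p.y.imK^2 := by
  simp [normSq, inner, re, Quaternion.re_mul]
  ring

lemma cube_key (r : Oct) :
    r * (r * r) = (4 * re r ^ 2 - normSq r) • r + (-(2 * re r * normSq r)) • (1 : Oct) := by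
  ext <;>
    simp [normSq_eq, re, Quaternion.re_mul, Quaternion.imI_mul, Quaternion.imJ_mul,
      Quaternion.imK_mul, Quaternion.re_one, Quaternion.imI_one, Quaternion.imJ_one, Quaternion.imK_one] <;> ring

end Oct

/-- A non-real octonion `r` has real cube `r³` if and only if `4 (Re r)² = |r|²`. -/
theorem oct_cube_real_iff (r : Oct) (hr : ¬ ∃ t : ℝ, r = t • (1 : Oct)) :
    ((4 * Oct.re r ^ 2 = Oct.normSq r → ∃ s : ℝ, r * (r * r) = s • (1 : Oct)) ∧
     ((∃ s : ℝ, r * (r * r) = s • (1 : Oct)) → 4 * Oct.re r ^ 2 = Oct.normSq r)) := by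
  constructor
  · intro h
    refine ⟨-(2 * Oct.re r * Oct.normSq r), ?_⟩
    rw [Oct.cube_key r]
    have h0 : 4 * Oct.re r ^ 2 - Oct.normSq r = 0 := by linarith
    rw [h0]
    ext <;> simp
  · rintro ⟨s, hs⟩
    by_contra hne
    have hc : 4 * Oct.re r ^ 2 - Oct.normSq r ≠ 0 := sub_ne_zero.mpr hne
    set c := 4 * Oct.re r ^ 2 - Oct.normSq r with hcdef
    have h1 : c • r + (-(2 * Oct.re r * Oct.normSq r)) • (1 : Oct) = s • (1 : Oct) := by
      rw [← Oct.cube_key r, hs]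
    apply hr
    refine ⟨r.x.re, ?_⟩
    have hx := congrArg Oct.x h1
    have hy := congrArg Oct.y h1
    simp at hx hy
    have hy0 : r.y = 0 := hy.resolve_left hc
    have hI := congrArg QuaternionAlgebra.imI hx
    have hJ := congrArg QuaternionAlgebra.imJ hx
    have hK := congrArg QuaternionAlgebra.imK hx
    simp [Quaternion.imI_one, Quaternion.imJ_one, Quaternion.imK_one] at hI hJ hK
    ext <;> simp [hy0, Quaternion.re_one, Quaternion.imI_one, Quaternion.imJ_one, Quaternion.imK_one] <;>
      first
        | rfl
        | exact hI.resolve_left hc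
        | exact hJ.resolve_left hc
        | exact hK.resolve_left hc
end

section
/- Let ξ be a purely imaginary unit octonion orthogonal to i, and let Q_ξ(x) = r_ξ x conj(r_ξ) with r_ξ = (1+i)(1+ξ)/2. Then for every octonion v orthogonal to 1 and to i (i.e. v in the span of j,k,e,f,g,h), Q_ξ(v) = ½((−1 + i + ξ + iξ)v + ⟨v, ξ + iξ⟩(1 + i + ξ + iξ)). -/
namespace Oct
theorem mul_def (p q : Oct) : p * q = ⟨p.x * q.x - star q.y * p.y, p.y * star q.x + q.y * p.x⟩ := rfl
theorem add_def (p q : Oct) : p + q = ⟨p.x + q.x, p.y + q.y⟩ := rfl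
theorem neg_def (p : Oct) : -p = ⟨-p.x, -p.y⟩ := rfl
theorem smul_def (t : ℝ) (p : Oct) : t • p = ⟨t • p.x, t • p.y⟩ := rfl
theorem one_def : (1 : Oct) = ⟨1, 0⟩ := rfl
theorem qmul_mk (a0 a1 a2 a3 b0 b1 b2 b3 : ℝ) :
    @HMul.hMul (Quaternion ℝ) (Quaternion ℝ) (Quaternion ℝ) _ ⟨a0, a1, a2, a3⟩ ⟨b0, b1, b2, b3⟩ =
      ⟨a0 * b0 - a1 * b1 - a2 * b2 - a3 * b3, a0 * b1 + a1 * b0 + a2 * b3 - a3 * b2,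
        a0 * b2 - a1 * b3 + a2 * b0 + a3 * b1, a0 * b3 + a1 * b2 - a2 * b1 + a3 * b0⟩ :=
  Quaternion.ext _ _ (Quaternion.re_mul _ _) (Quaternion.imI_mul _ _) (Quaternion.imJ_mul _ _)
    (Quaternion.imK_mul _ _)
theorem qstar_mk (a0 a1 a2 a3 : ℝ) :
    @star (Quaternion ℝ) _ ⟨a0, a1, a2, a3⟩ = ⟨a0, -a1, -a2, -a3⟩ :=
  Quaternion.ext _ _ (Quaternion.re_star _) (Quaternion.imI_star _) (Quaternion.imJ_star _)
    (Quaternion.imK_star _)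
theorem qadd_mk (a0 a1 a2 a3 b0 b1 b2 b3 : ℝ) :
    @HAdd.hAdd (Quaternion ℝ) (Quaternion ℝ) (Quaternion ℝ) _ ⟨a0, a1, a2, a3⟩ ⟨b0, b1, b2, b3⟩ =
      ⟨a0 + b0, a1 + b1, a2 + b2, a3 + b3⟩ := rfl
theorem qsub_mk (a0 a1 a2 a3 b0 b1 b2 b3 : ℝ) :
    @HSub.hSub (Quaternion ℝ) (Quaternion ℝ) (Quaternion ℝ) _ ⟨a0, a1, a2, a3⟩ ⟨b0, b1, b2, b3⟩ =
      ⟨a0 - b0, a1 - b1, a2 - b2, a3 - b3⟩ := rfl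
theorem qneg_mk (a0 a1 a2 a3 : ℝ) :
    @Neg.neg (Quaternion ℝ) _ ⟨a0, a1, a2, a3⟩ = ⟨-a0, -a1, -a2, -a3⟩ := rfl
theorem qsmul_mk (t a0 a1 a2 a3 : ℝ) :
    @HSMul.hSMul ℝ (Quaternion ℝ) (Quaternion ℝ) _ t ⟨a0, a1, a2, a3⟩ =
      ⟨t * a0, t * a1, t * a2, t * a3⟩ := rfl
theorem qone_mk : (1 : Quaternion ℝ) = ⟨1, 0, 0, 0⟩ := rfl
theorem qzero_mk : (0 : Quaternion ℝ) = ⟨0, 0, 0, 0⟩ := rfl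
end Oct

set_option maxHeartbeats 2000000 in

/-- Lemma 3.6: for `ξ` a purely imaginary unit octonion orthogonal to `i`, and `v`
orthogonal to `1` and `i`,
`Q_ξ(v) = ½((-1 + i + ξ + iξ) v + ⟨v, ξ + iξ⟩ (1 + i + ξ + iξ))`. -/
theorem oct_Q_xi_formula (ξ v : Oct) (him : Oct.re ξ = 0)
    (hunit : Oct.normSq ξ = 1) (horth : Oct.inner ξ Oct.i = 0)
    (hv1 : Oct.inner v 1 = 0) (hvi : Oct.inner v Oct.i = 0) :
    ((1 / 2 : ℝ) • ((1 + Oct.i) * (1 + ξ)) * v) *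
        Oct.conj ((1 / 2 : ℝ) • ((1 + Oct.i) * (1 + ξ))) =
      (1 / 2 : ℝ) •
        ((-1 + Oct.i + ξ + Oct.i * ξ) * v +
          Oct.inner v (ξ + Oct.i * ξ) • (1 + Oct.i + ξ + Oct.i * ξ)) := by
  obtain ⟨⟨a0, a1, a2, a3⟩, b0, b1, b2, b3⟩ := ξ
  obtain ⟨⟨c0, c1, c2, c3⟩, d0, d1, d2, d3⟩ := v
  simp only [Oct.normSq, Oct.inner, Oct.re, Oct.conj, Oct.i, Oct.mul_def, Oct.add_def,
    Oct.neg_def, Oct.smul_def, Oct.one_def, Oct.ext_iff, Quaternion.ext_iff] at *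
  simp only [Quaternion.re_mul, Quaternion.imI_mul, Quaternion.imJ_mul, Quaternion.imK_mul,
    Quaternion.re_add, Quaternion.imI_add, Quaternion.imJ_add, Quaternion.imK_add,
    Quaternion.re_neg, Quaternion.imI_neg, Quaternion.imJ_neg, Quaternion.imK_neg,
    Quaternion.re_sub, Quaternion.imI_sub, Quaternion.imJ_sub, Quaternion.imK_sub,
    Quaternion.re_smul, Quaternion.imI_smul, Quaternion.imJ_smul, Quaternion.imK_smul,
    Quaternion.re_star, Quaternion.imI_star, Quaternion.imJ_star, Quaternion.imK_star,
    Quaternion.re_one, Quaternion.imI_one, Quaternion.imJ_one, Quaternion.imK_one,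
    Quaternion.re_zero, Quaternion.imI_zero, Quaternion.imJ_zero, Quaternion.imK_zero,
    Oct.qmul_mk, Oct.qstar_mk, Oct.qadd_mk, Oct.qsub_mk, Oct.qneg_mk, Oct.qsmul_mk,
    Oct.qone_mk, Oct.qzero_mk,
    smul_eq_mul] at *
  have ha0 : a0 = 0 := by linarith
  have ha1 : a1 = 0 := by linarith
  have hc0 : c0 = 0 := by linarith
  have hc1 : c1 = 0 := by linarith
  subst ha0 ha1 hc0 hc1
  refine ⟨⟨?_, ?_, ?_, ?_⟩, ?_, ?_, ?_, ?_⟩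
  · ring
  · ring
  · linear_combination (-(c2) / 2) * hunit
  · linear_combination (-(c3) / 2) * hunit
  · linear_combination (-(d0) / 2) * hunit
  · linear_combination (-(d1) / 2) * hunit
  · linear_combination (-(d2) / 2) * hunit
  · linear_combination (-(d3) / 2) * hunit
end
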